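/- Let R = ∏_{j=1}^{n} [α_j, β_j] ⊂ ℝⁿ be a hyperrectangle of positive Lebesgue measure with side lengths δ_j = β_j − α_j, let L ≥ 0 and p ∈ ℝ, and let A be the set of functions τ : R → ℝ that are L-Lipschitz with respect to the ℓ¹-norm and satisfy ∫_R τ(s) ds = p. Then sup_{τ∈A} max_{c∈R} τ(c) = p/λ(R) + (L/2) Σ_{j=1}^{n} δ_j, and the supremum is attained by some τ ∈ A. -/

import Mathlib

open MeasureTheory Real Finset

noncomputable section

lemma pi_integral_Icc {n : ℕ} (α β : Fin n → ℝ) (f : Fin n → ℝ → ℝ) :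
    ∫ s in Set.Icc α β, ∏ i, f i (s i) = ∏ i, ∫ t in Set.Icc (α i) (β i), f i t := by
  rw [← Set.pi_univ_Icc, ← MeasureTheory.integral_indicator
    (MeasurableSet.univ_pi (fun i => measurableSet_Icc))]
  have h : ∀ x : Fin n → ℝ,
      (Set.pi Set.univ fun i => Set.Icc (α i) (β i)).indicator (fun s => ∏ i, f i (s i)) x
        = ∏ i, (Set.Icc (α i) (β i)).indicator (f i) (x i) := by
    intro x
    by_cases hx : x ∈ Set.pi Set.univ fun i => Set.Icc (α i) (β i)
    · rw [Set.indicator_of_mem hx]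
      exact Finset.prod_congr rfl fun i _ =>
        (Set.indicator_of_mem (hx i (Set.mem_univ i)) _).symm
    · rw [Set.indicator_of_notMem hx]
      rw [Set.mem_univ_pi] at hx
      push_neg at hx
      obtain ⟨i, hi⟩ := hx
      exact (Finset.prod_eq_zero (Finset.mem_univ i) (Set.indicator_of_notMem hi _)).symm
  simp_rw [h]
  rw [MeasureTheory.volume_pi, MeasureTheory.integral_fintype_prod_eq_prod
    (f := fun i => (Set.Icc (α i) (β i)).indicator (f i))]
  exact Finset.prod_congr rfl fun i _ => by
    rw [MeasureTheory.integral_indicator measurableSet_Icc]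

lemma single_coord_integral {n : ℕ} (α β : Fin n → ℝ) (hab : α ≤ β) (j : Fin n) (g : ℝ → ℝ) :
    ∫ s in Set.Icc α β, g (s j)
      = (∫ t in Set.Icc (α j) (β j), g t) * ∏ i ∈ Finset.univ.erase j, (β i - α i) := by
  have h1 : (fun s : Fin n → ℝ => g (s j)) = fun s => ∏ i, (if i = j then g (s i) else 1) := by
    funext s
    rw [Finset.prod_eq_single j (fun i _ hij => if_neg hij) (by simp), if_pos rfl]
  rw [h1, pi_integral_Icc α β (fun i t => if i = j then g t else 1),
    ← Finset.mul_prod_erase Finset.univ _ (Finset.mem_univ j)]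
  congr 1
  · simp
  · refine Finset.prod_congr rfl fun i hi => ?_
    have : i ≠ j := Finset.ne_of_mem_erase hi
    simp [this, Real.volume_Icc, ENNReal.toReal_ofReal (sub_nonneg.2 (hab i)), hab i]

lemma int_sub_left (a b : ℝ) (h : a ≤ b) : ∫ t in Set.Icc a b, (t - a) = (b - a)^2 / 2 := by
  rw [MeasureTheory.integral_Icc_eq_integral_Ioc, ← intervalIntegral.integral_of_le h]
  rw [intervalIntegral.integral_sub intervalIntegral.intervalIntegrable_id
    (intervalIntegrable_const)]
  simp [integral_id]
  ring

lemma int_abs_le (a b c : ℝ) (hac : a ≤ c) (hcb : c ≤ b) :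
    ∫ t in Set.Icc a b, |c - t| ≤ (b - a)^2 / 2 := by
  have hab : a ≤ b := hac.trans hcb
  have hint : ∀ u v : ℝ, IntervalIntegrable (fun t => |c - t|) volume u v :=
    fun u v => (continuous_const.sub continuous_id).abs.intervalIntegrable u v
  rw [MeasureTheory.integral_Icc_eq_integral_Ioc, ← intervalIntegral.integral_of_le hab,
    ← intervalIntegral.integral_add_adjacent_intervals (hint a c) (hint c b)]
  have e1 : ∫ t in a..c, |c - t| = (c - a)^2/2 := by
    rw [intervalIntegral.integral_congr (g := fun t => c - t)
      (fun t ht => by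
        rw [Set.uIcc_of_le hac] at ht
        exact abs_of_nonneg (sub_nonneg.2 ht.2))]
    rw [intervalIntegral.integral_sub intervalIntegrable_const
      intervalIntegral.intervalIntegrable_id]
    simp [integral_id]
    ring
  have e2 : ∫ t in c..b, |c - t| = (b - c)^2/2 := by
    rw [intervalIntegral.integral_congr (g := fun t => t - c)
      (fun t ht => by
        rw [Set.uIcc_of_le hcb] at ht
        rw [abs_sub_comm]
        exact abs_of_nonneg (sub_nonneg.2 ht.1))]
    rw [intervalIntegral.integral_sub intervalIntegral.intervalIntegrable_id
      intervalIntegrable_const]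
    simp [integral_id]
    ring
  rw [e1, e2]
  nlinarith [mul_nonneg (sub_nonneg.2 hac) (sub_nonneg.2 hcb)]

theorem relaxed_max_over_rectangle
    (n : ℕ)
    (α β : Fin n → ℝ)
    (R : Set (Fin n → ℝ)) (hR : R = Set.Icc α β)
    (hRpos : 0 < volume R)
    (L p : ℝ) (hL : 0 ≤ L) :
    IsGreatest
      {y : ℝ | ∃ τ : (Fin n → ℝ) → ℝ,
        (∀ x ∈ R, ∀ x' ∈ R, |τ x - τ x'| ≤ L * ∑ j : Fin n, |x j - x' j|) ∧
        (∫ s in R, τ s) = p ∧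
        ∃ c ∈ R, y = τ c}
      (p / (volume R).toReal + L / 2 * ∑ j : Fin n, (β j - α j)) := by
  subst hR
  set R := Set.Icc α β with hRdef
  -- side lengths are positive
  have hlt : ∀ j, α j < β j := by
    intro j
    rw [hRdef, Real.volume_Icc_pi] at hRpos
    rw [CanonicallyOrderedAdd.prod_pos] at hRpos
    have := hRpos j (Finset.mem_univ j)
    rw [ENNReal.ofReal_pos] at this
    linarith
  have hab : α ≤ β := fun j => (hlt j).le
  set V : ℝ := (volume R).toReal with hVdef
  have hVeq : V = ∏ i, (β i - α i) := Real.volume_Icc_pi_toReal hab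
  have hVpos : 0 < V := by
    rw [hVeq]
    exact Finset.prod_pos fun i _ => sub_pos.2 (hlt i)
  have hcomp : IsCompact R := isCompact_Icc
  have hmeas : MeasurableSet R := measurableSet_Icc
  -- the key single-coordinate product identity
  have hprod : ∀ j : Fin n, ((β j - α j)^2/2) * ∏ i ∈ Finset.univ.erase j, (β i - α i)
      = V * (β j - α j) / 2 := by
    intro j
    have h1 : V = (β j - α j) * ∏ i ∈ Finset.univ.erase j, (β i - α i) := by
      rw [hVeq, ← Finset.mul_prod_erase Finset.univ _ (Finset.mem_univ j)]
    rw [h1]; ring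
  have hPnonneg : ∀ j : Fin n, (0:ℝ) ≤ ∏ i ∈ Finset.univ.erase j, (β i - α i) :=
    fun j => Finset.prod_nonneg fun i _ => sub_nonneg.2 (hab i)
  -- exact integral of coordinate functions
  have hint1 : ∀ j : Fin n, ∫ s in R, (s j - α j) = V * (β j - α j) / 2 := by
    intro j
    rw [hRdef, single_coord_integral α β hab j (fun t => t - α j),
      int_sub_left _ _ (hab j), hprod j]
  -- integral bound for |c j - s j|
  have hint2 : ∀ c ∈ R, ∀ j : Fin n, ∫ s in R, |c j - s j| ≤ V * (β j - α j) / 2 := by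
    intro c hc j
    rw [hRdef, single_coord_integral α β hab j (fun t => |c j - t|), ← hprod j]
    exact mul_le_mul_of_nonneg_right (int_abs_le _ _ _ (hc.1 j) (hc.2 j)) (hPnonneg j)
  -- integrability facts
  have hintone : ∀ (r : ℝ), IntegrableOn (fun _ : Fin n → ℝ => r) R :=
    fun r => integrableOn_const hcomp.measure_lt_top.ne
  have hintcoord : ∀ j : Fin n, IntegrableOn (fun s : Fin n → ℝ => s j - α j) R :=
    fun j => ((continuous_apply j).sub continuous_const).continuousOn.integrableOn_compact hcomp
  have hintabs : ∀ (c : Fin n → ℝ) (j : Fin n),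
      IntegrableOn (fun s : Fin n → ℝ => |c j - s j|) R :=
    fun c j => ((continuous_const.sub (continuous_apply j)).abs).continuousOn.integrableOn_compact
      hcomp
  constructor
  · -- attainment
    set C : ℝ := p / V - L / 2 * ∑ j : Fin n, (β j - α j) with hCdef
    refine ⟨fun x => C + L * ∑ j, (x j - α j), ?_, ?_, β, ⟨hab, le_refl β⟩, by ring⟩
    · intro x _ x' _
      have h1 : (C + L * ∑ j, (x j - α j)) - (C + L * ∑ j, (x' j - α j))
          = L * ∑ j, (x j - x' j) := by
        rw [show (C + L * ∑ j, (x j - α j)) - (C + L * ∑ j, (x' j - α j))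
          = L * (∑ j, (x j - α j) - ∑ j, (x' j - α j)) by ring, ← Finset.sum_sub_distrib]
        congr 1
        exact Finset.sum_congr rfl fun j _ => by ring
      rw [h1, abs_mul, abs_of_nonneg hL]
      exact mul_le_mul_of_nonneg_left
        (le_trans (Finset.abs_sum_le_sum_abs _ _) (le_refl _)) hL
    · have hintsum : IntegrableOn (fun s : Fin n → ℝ => L * ∑ j, (s j - α j)) R := by
        apply Integrable.const_mul
        exact integrable_finset_sum _ fun j _ => hintcoord j
      rw [MeasureTheory.integral_add (hintone C) hintsum, MeasureTheory.setIntegral_const,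
        MeasureTheory.integral_const_mul, MeasureTheory.integral_finset_sum _
          (fun j _ => hintcoord j)]
      have : ∑ j : Fin n, ∫ s in R, (s j - α j) = V / 2 * ∑ j : Fin n, (β j - α j) := by
        rw [Finset.mul_sum]
        exact Finset.sum_congr rfl fun j _ => by rw [hint1 j]; ring
      rw [this]
      simp only [smul_eq_mul, measureReal_def, ← hVdef]
      rw [hCdef]
      field_simp
      ring
  · -- upper bound
    rintro y ⟨τ, hlip, hintτ, c, hc, rfl⟩
    -- τ is integrable on R
    have hτint : IntegrableOn τ R := by
      have hlipOn : LipschitzOnWith (L * n).toNNReal τ R := by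
        apply LipschitzOnWith.of_dist_le_mul
        intro x hx x' hx'
        rw [Real.coe_toNNReal _ (by positivity), Real.dist_eq]
        calc |τ x - τ x'| ≤ L * ∑ j : Fin n, |x j - x' j| := hlip x hx x' hx'
          _ ≤ L * ∑ _j : Fin n, dist x x' := by
              apply mul_le_mul_of_nonneg_left _ hL
              exact Finset.sum_le_sum fun j _ => by
                rw [← Real.dist_eq]; exact dist_le_pi_dist x x' j
          _ = L * n * dist x x' := by
              rw [Finset.sum_const, Finset.card_univ, Fintype.card_fin, nsmul_eq_mul]; ring
      exact hlipOn.continuousOn.integrableOn_compact hcomp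
    have hintsum : IntegrableOn (fun s : Fin n → ℝ => L * ∑ j, |c j - s j|) R := by
      apply Integrable.const_mul
      exact integrable_finset_sum _ fun j _ => hintabs c j
    have hgint : IntegrableOn (fun s : Fin n → ℝ => τ c - L * ∑ j, |c j - s j|) R :=
      (hintone (τ c)).sub hintsum
    have hmono : ∀ s ∈ R, τ c - L * ∑ j, |c j - s j| ≤ τ s := by
      intro s hs
      have := (le_abs_self (τ c - τ s)).trans (hlip c hc s hs)
      linarith
    have hle : ∫ s in R, (τ c - L * ∑ j, |c j - s j|) ≤ p := by
      rw [← hintτ]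
      exact MeasureTheory.setIntegral_mono_on hgint hτint hmeas hmono
    rw [MeasureTheory.integral_sub (hintone (τ c)) hintsum, MeasureTheory.setIntegral_const,
      MeasureTheory.integral_const_mul,
      MeasureTheory.integral_finset_sum _ (fun j _ => hintabs c j)] at hle
    have hsumle : ∑ j : Fin n, ∫ s in R, |c j - s j|
        ≤ ∑ j : Fin n, V * (β j - α j) / 2 :=
      Finset.sum_le_sum fun j _ => hint2 c hc j
    have hLsum : L * ∑ j : Fin n, ∫ s in R, |c j - s j|
        ≤ L * (V / 2 * ∑ j : Fin n, (β j - α j)) := by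
      apply mul_le_mul_of_nonneg_left _ hL
      refine hsumle.trans_eq ?_
      rw [Finset.mul_sum]
      exact Finset.sum_congr rfl fun j _ => by ring
    have hkey : τ c * V ≤ p + L * (V / 2 * ∑ j : Fin n, (β j - α j)) := by
      simp only [smul_eq_mul, measureReal_def, ← hVdef] at hle
      nlinarith
    calc τ c = τ c * V / V := by field_simp
      _ ≤ (p + L * (V / 2 * ∑ j : Fin n, (β j - α j))) / V := by gcongr
      _ = p / V + L / 2 * ∑ j : Fin n, (β j - α j) := by field_simp
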